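/- Let (X,p) be a cone-complete TVS-cone metric space over E with cone P, fix e ∈ int P, and let φ : E → E be continuous with φ(P) ⊆ P, φ increasing on P (if a, b ∈ P and a ≤ b then φ(a) ≤ φ(b)), φ(0) = 0, and φ(r·e) ≪ r·e for every real r > 0. If T : X → X satisfies p(Tx, Ty) ≤ φ(p(x,y)) for all x, y ∈ X, then T has a unique fixed point u ∈ X, and for every x ∈ X the sequence of iterates (Tⁿx) cone-converges to u. -/

import Mathlib

open Filter Topology

section Defs

variable {E : Type*} [AddCommGroup E] [Module ℝ E] [TopologicalSpace E]

/-- `P` is a closed, pointed convex cone with nonempty interior in the TVS `E`. -/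
structure IsTVSCone (P : Set E) : Prop where
  add_mem : ∀ ⦃a⦄, a ∈ P → ∀ ⦃b⦄, b ∈ P → a + b ∈ P
  smul_mem : ∀ (r : ℝ), 0 ≤ r → ∀ ⦃a⦄, a ∈ P → r • a ∈ P
  pointed : ∀ a, a ∈ P → -a ∈ P → a = 0
  isClosed : IsClosed P
  int_nonempty : (interior P).Nonempty

/-- `a ≤ b` with respect to the cone `P`. -/
def ConeLe (P : Set E) (a b : E) : Prop := b - a ∈ P

/-- `a ≪ b` with respect to the cone `P`. -/
def ConeLt (P : Set E) (a b : E) : Prop := b - a ∈ interior P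

/-- `p : X × X → E` is a TVS-cone metric over the cone `P`. -/
structure IsConeMetric (P : Set E) {X : Type*} (p : X → X → E) : Prop where
  nonneg : ∀ x y, ConeLe P 0 (p x y)
  eq_zero_iff : ∀ x y, p x y = 0 ↔ x = y
  symm : ∀ x y, p x y = p y x
  triangle : ∀ x y z, ConeLe P (p x y) (p x z + p z y)

/-- The sequence `x` cone-converges to `a`. -/
def ConeConverges (P : Set E) {X : Type*} (p : X → X → E) (x : ℕ → X) (a : X) : Prop :=
  ∀ c, c ∈ interior P → ∃ N, ∀ n ≥ N, ConeLt P (p (x n) a) c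

/-- The sequence `x` is cone-Cauchy. -/
def ConeCauchy (P : Set E) {X : Type*} (p : X → X → E) (x : ℕ → X) : Prop :=
  ∀ c, c ∈ interior P → ∃ N, ∀ n ≥ N, ∀ m ≥ N, ConeLt P (p (x n) (x m)) c

/-- `(X, p)` is cone-complete. -/
def ConeComplete (P : Set E) {X : Type*} (p : X → X → E) : Prop :=
  ∀ x : ℕ → X, ConeCauchy P p x → ∃ a, ConeConverges P p x a

/-- The nonlinear scalarization ξ_e(y) = inf {t : t • e - y ∈ P}. -/
noncomputable def xiScal (P : Set E) (e y : E) : ℝ := sInf {t : ℝ | t • e - y ∈ P}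

/-- The open ball `B(x, c) = {y : p x y ≪ c}`. -/
def coneBall (P : Set E) {X : Type*} (p : X → X → E) (x : X) (c : E) : Set X :=
  {y | ConeLt P (p x y) c}

/-- The cone metric topology `τ_p`, generated by the balls `B(x,c)`, `c ≫ 0`. -/
def coneTopology (P : Set E) {X : Type*} (p : X → X → E) : TopologicalSpace X :=
  TopologicalSpace.generateFrom {s | ∃ x c, c ∈ interior P ∧ s = coneBall P p x c}

end Defs

set_option linter.unusedSectionVars false
set_option linter.unusedVariables false
section Aux

variable {E : Type*} [AddCommGroup E] [Module ℝ E] [TopologicalSpace E]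
  [IsTopologicalAddGroup E] [ContinuousSMul ℝ E] {P : Set E}

lemma IsTVSCone.zero_mem (hP : IsTVSCone P) : (0 : E) ∈ P := by
  obtain ⟨a, ha⟩ := hP.int_nonempty
  simpa using hP.smul_mem 0 le_rfl (interior_subset ha)

lemma IsTVSCone.smul_int (hP : IsTVSCone P) {r : ℝ} (hr : 0 < r) {a : E}
    (ha : a ∈ interior P) : r • a ∈ interior P := by
  have hmap : IsOpenMap fun x : E => r • x := (Homeomorph.smulOfNeZero r hr.ne').isOpenMap
  have hsub : (fun x : E => r • x) '' interior P ⊆ P := by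
    rintro _ ⟨x, hx, rfl⟩; exact hP.smul_mem r hr.le (interior_subset hx)
  exact interior_maximal hsub (hmap _ isOpen_interior) ⟨a, ha, rfl⟩

lemma IsTVSCone.int_add (hP : IsTVSCone P) {a b : E} (ha : a ∈ interior P)
    (hb : b ∈ P) : a + b ∈ interior P := by
  have hmap : IsOpenMap fun x : E => x + b := isOpenMap_add_right b
  have hsub : (fun x : E => x + b) '' interior P ⊆ P := by
    rintro _ ⟨x, hx, rfl⟩; exact hP.add_mem (interior_subset hx) hb
  exact interior_maximal hsub (hmap _ isOpen_interior) ⟨a, ha, rfl⟩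

lemma IsTVSCone.trick (hP : IsTVSCone P) {a : E} (ha : a ∈ interior P) (y : E) :
    ∃ ε : ℝ, 0 < ε ∧ a - ε • y ∈ interior P := by
  have hc : Continuous fun s : ℝ => a - s • y :=
    continuous_const.sub (continuous_id.smul continuous_const)
  have h0 : (fun s : ℝ => a - s • y) 0 ∈ interior P := by simpa using ha
  have hnb : (fun s : ℝ => a - s • y) ⁻¹' interior P ∈ nhds (0 : ℝ) :=
    hc.continuousAt.preimage_mem_nhds (isOpen_interior.mem_nhds h0)
  obtain ⟨ε, hε, hball⟩ := Metric.mem_nhds_iff.1 hnb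
  refine ⟨ε / 2, by positivity, hball ?_⟩
  simp only [Metric.mem_ball, Real.dist_eq, sub_zero]
  rw [abs_of_pos (by positivity)]; linarith

lemma IsTVSCone.smul_e_nonneg (hP : IsTVSCone P) {e : E} (hene : e ≠ 0) (heP : e ∈ P)
    {t : ℝ} (ht : t • e ∈ P) : 0 ≤ t := by
  by_contra h
  push_neg at h
  have h2 : (-t) • e ∈ P := hP.smul_mem _ (by linarith) heP
  have h3 : t • e = 0 := hP.pointed _ ht (by rwa [← neg_smul])
  rcases smul_eq_zero.1 h3 with h4 | h4
  · exact absurd h4 (by linarith)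
  · exact hene h4

section Xi

variable (hP : IsTVSCone P) {e : E} (he : e ∈ interior P) (hene : e ≠ 0)
include hP he hene

lemma xi_set_nonempty (y : E) : {t : ℝ | t • e - y ∈ P}.Nonempty := by
  obtain ⟨ε, hε, hm⟩ := hP.trick he y
  refine ⟨1 / ε, ?_⟩
  have := hP.smul_mem (1 / ε) (by positivity) (interior_subset hm)
  show (1 / ε) • e - y ∈ P
  rw [smul_sub, smul_smul, one_div_mul_cancel hε.ne', one_smul] at this
  exact this

lemma xi_bddBelow (y : E) : BddBelow {t : ℝ | t • e - y ∈ P} := by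
  obtain ⟨ε, hε, hm⟩ := hP.trick he (-y)
  have hm' : (1 / ε) • e + y ∈ P := by
    have := hP.smul_mem (1 / ε) (by positivity) (interior_subset hm)
    rw [smul_sub, smul_smul, one_div_mul_cancel hε.ne', one_smul] at this
    rwa [sub_neg_eq_add] at this
  refine ⟨-(1 / ε), fun t ht => ?_⟩
  have hsum : (t + 1 / ε) • e ∈ P := by
    have := hP.add_mem ht hm'
    rw [add_smul]
    convert this using 1; abel
  have := hP.smul_e_nonneg hene (interior_subset he) hsum
  linarith

lemma xi_mem_set (y : E) : (xiScal P e y) • e - y ∈ P :=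
  IsClosed.csInf_mem
    (hP.isClosed.preimage (by fun_prop : Continuous fun t : ℝ => t • e - y))
    (xi_set_nonempty hP he hene y) (xi_bddBelow hP he hene y)

lemma xi_le {t : ℝ} {y : E} (ht : t • e - y ∈ P) : xiScal P e y ≤ t :=
  csInf_le (xi_bddBelow hP he hene y) ht

lemma xi_nonneg {y : E} (hy : y ∈ P) : 0 ≤ xiScal P e y := by
  refine le_csInf (xi_set_nonempty hP he hene y) fun t ht => ?_
  have : t • e ∈ P := by
    have := hP.add_mem ht hy
    rwa [sub_add_cancel] at this
  exact hP.smul_e_nonneg hene (interior_subset he) this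

lemma xi_smul_e (t : ℝ) : xiScal P e (t • e) = t := by
  refine le_antisymm (xi_le hP he hene (by simp [hP.zero_mem])) ?_
  refine le_csInf (xi_set_nonempty hP he hene _) fun s hs => ?_
  have : (s - t) • e ∈ P := by rwa [sub_smul]
  have := hP.smul_e_nonneg hene (interior_subset he) this
  linarith

lemma xi_mono {x y : E} (hxy : y - x ∈ P) : xiScal P e x ≤ xiScal P e y := by
  refine xi_le hP he hene ?_
  have := hP.add_mem (xi_mem_set hP he hene y) hxy
  convert this using 1; abel

lemma xi_add (x y : E) : xiScal P e (x + y) ≤ xiScal P e x + xiScal P e y := by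
  refine xi_le hP he hene ?_
  have := hP.add_mem (xi_mem_set hP he hene x) (xi_mem_set hP he hene y)
  rw [add_smul]
  convert this using 1; abel

lemma xi_lt {x y : E} (hxy : y - x ∈ interior P) : xiScal P e x < xiScal P e y := by
  obtain ⟨ε, hε, hm⟩ := hP.trick hxy e
  have hle : xiScal P e x ≤ xiScal P e y - ε := by
    refine xi_le hP he hene ?_
    have := hP.add_mem (xi_mem_set hP he hene y) (interior_subset hm)
    rw [sub_smul]
    convert this using 1; abel
  linarith

lemma xi_cone {y c : E} {δ : ℝ} (hy : y ∈ P) (hlt : xiScal P e y < δ)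
    (hc : c - δ • e ∈ interior P) : c - y ∈ interior P := by
  have h1 : δ • e - y ∈ P := by
    have h2 : (δ - xiScal P e y) • e ∈ P :=
      hP.smul_mem _ (by linarith) (interior_subset he)
    have := hP.add_mem h2 (xi_mem_set hP he hene y)
    rw [sub_smul] at this
    convert this using 1; abel
  have := hP.int_add hc h1
  convert this using 1; abel

end Xi

end Aux

/-- a nonlinear contraction with `φ(r • e) ≪ r • e` on a cone-complete
TVS-cone metric space has a unique fixed point, and all Picard iterates cone-converge to it. -/
theorem stmt_19 {E X : Type*} [AddCommGroup E] [Module ℝ E] [TopologicalSpace E]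
    [IsTopologicalAddGroup E] [ContinuousSMul ℝ E] [T2Space E] [Nonempty X]
    (P : Set E) (hP : IsTVSCone P) (p : X → X → E) (hp : IsConeMetric P p)
    (hcomplete : ConeComplete P p)
    (e : E) (he : e ∈ interior P) (T : X → X) (φ : E → E) (hφcont : Continuous φ)
    (hφP : ∀ a ∈ P, φ a ∈ P)
    (hφmono : ∀ a ∈ P, ∀ b ∈ P, ConeLe P a b → ConeLe P (φ a) (φ b))
    (hφ0 : φ 0 = 0)
    (hφlt : ∀ r : ℝ, 0 < r → ConeLt P (φ (r • e)) (r • e))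
    (hT : ∀ x y : X, ConeLe P (p (T x) (T y)) (φ (p x y))) :
    ∃ u : X, T u = u ∧ (∀ v : X, T v = v → v = u) ∧
      ∀ x : X, ConeConverges P p (fun n => T^[n] x) u := by
  classical
  by_cases htriv : ∀ a : E, a = 0
  · obtain ⟨x₀⟩ := ‹Nonempty X›
    have hxy : ∀ x y : X, x = y := fun x y => (hp.eq_zero_iff x y).1 (htriv _)
    refine ⟨x₀, hxy _ _, fun v _ => hxy v x₀, fun x c hc => ⟨0, fun n _ => ?_⟩⟩
    show c - p (T^[n] x) x₀ ∈ interior P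
    rw [htriv (c - p (T^[n] x) x₀), ← htriv e]
    exact he
  push_neg at htriv
  obtain ⟨a0, ha0⟩ := htriv
  have hene : e ≠ 0 := by
    rintro rfl
    have h0 : (0 : E) ∈ interior P := he
    have key : ∀ y : E, y ∈ P := by
      intro y
      obtain ⟨ε, hε, hm⟩ := hP.trick h0 (-y)
      have := hP.smul_mem (1 / ε) (by positivity) (interior_subset hm)
      rw [zero_sub] at this
      simpa [smul_neg, smul_smul, inv_mul_cancel₀ hε.ne'] using this
    exact ha0 (hP.pointed _ (key a0) (key (-a0)))
  have heP : e ∈ P := interior_subset he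
  set ξ : E → ℝ := xiScal P e with hξdef
  set d : X → X → ℝ := fun x y => ξ (p x y) with hddef
  set ψ : ℝ → ℝ := fun r => ξ (φ (r • e)) with hψdef
  have hpP : ∀ x y, p x y ∈ P := fun x y => by
    have := hp.nonneg x y; simpa [ConeLe] using this
  have hdnn : ∀ x y, 0 ≤ d x y := fun x y => xi_nonneg hP he hene (hpP x y)
  have hd0 : ∀ x y : X, d x y = 0 → x = y := by
    intro x y h
    apply (hp.eq_zero_iff x y).1
    refine hP.pointed _ (hpP x y) ?_
    have hm := xi_mem_set hP he hene (p x y)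
    rw [show xiScal P e (p x y) = d x y from rfl, h, zero_smul, zero_sub] at hm
    exact hm
  have hdtri : ∀ x y z, d x y ≤ d x z + d z y := fun x y z =>
    le_trans (xi_mono hP he hene (hp.triangle x y z)) (xi_add hP he hene _ _)
  have hdsymm : ∀ x y, d x y = d y x := fun x y => by simp only [hddef, hp.symm x y]
  have hdself : ∀ x, d x x = 0 := by
    intro x
    have h1 : p x x = 0 := (hp.eq_zero_iff x x).2 rfl
    have h2 : ξ (p x x) ≤ 0 := xi_le hP he hene (by simp [h1, hP.zero_mem])
    exact le_antisymm h2 (hdnn x x)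
  have hψnn : ∀ r : ℝ, 0 ≤ r → 0 ≤ ψ r := fun r hr =>
    xi_nonneg hP he hene (hφP _ (hP.smul_mem r hr heP))
  have hψlt : ∀ r : ℝ, 0 < r → ψ r < r := by
    intro r hr
    have h1 : ξ (φ (r • e)) < ξ (r • e) := xi_lt hP he hene (hφlt r hr)
    calc ψ r = ξ (φ (r • e)) := rfl
    _ < ξ (r • e) := h1
    _ = r := xi_smul_e hP he hene r
  have hψle : ∀ r : ℝ, 0 ≤ r → ψ r ≤ r := by
    intro r hr
    rcases hr.lt_or_eq with h | h
    · exact (hψlt r h).le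
    · rw [← h]
      have : ψ 0 = ξ 0 := by simp [hψdef, hφ0]
      rw [this]
      exact xi_le hP he hene (by simp [hP.zero_mem])
  have hψmono : ∀ r s : ℝ, 0 ≤ r → r ≤ s → ψ r ≤ ψ s := by
    intro r s hr hrs
    refine xi_mono hP he hene ?_
    refine hφmono _ (hP.smul_mem r hr heP) _ (hP.smul_mem s (hr.trans hrs) heP) ?_
    show s • e - r • e ∈ P
    rw [← sub_smul]
    exact hP.smul_mem _ (by linarith) heP
  have hdT : ∀ x y, d (T x) (T y) ≤ ψ (d x y) := by
    intro x y
    have h1 : ξ (p (T x) (T y)) ≤ ξ (φ (p x y)) := xi_mono hP he hene (hT x y)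
    have h2 : ξ (φ (p x y)) ≤ ψ (d x y) := by
      refine xi_mono hP he hene ?_
      refine hφmono _ (hpP x y) _ (hP.smul_mem _ (hdnn x y) heP) ?_
      exact xi_mem_set hP he hene (p x y)
    exact h1.trans h2
  -- gap: successive distances get arbitrarily small
  have hgap : ∀ x : X, ∀ ε : ℝ, 0 < ε → ∃ N : ℕ, d (T^[N] x) (T^[N + 1] x) < ε := by
    intro x ε hε
    set a : ℕ → ℝ := fun n => d (T^[n] x) (T^[n + 1] x) with hadef
    have hstep : ∀ n, a (n + 1) ≤ ψ (a n) := by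
      intro n
      have h1 : a (n + 1) = d (T (T^[n] x)) (T (T^[n + 1] x)) := by
        simp only [hadef, Function.iterate_succ_apply']
      rw [h1]; exact hdT _ _
    have hann : ∀ n, 0 ≤ a n := fun n => hdnn _ _
    have hmono : ∀ n, a (n + 1) ≤ a n := fun n => (hstep n).trans (hψle _ (hann n))
    set L := ⨅ n, a n with hLdef
    have hbdd : BddBelow (Set.range a) := ⟨0, by rintro _ ⟨n, rfl⟩; exact hann n⟩
    have hLle : ∀ n, L ≤ a n := fun n => ciInf_le hbdd n
    have hL0 : 0 ≤ L := le_ciInf hann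
    have hLzero : L = 0 := by
      by_contra hL
      have hLpos : 0 < L := hL0.lt_of_ne (Ne.symm hL)
      have hψL : ψ L < L := hψlt L hLpos
      set ε' := (L - ψ L) / 2 with hε'def
      have hε' : 0 < ε' := by simp only [hε'def]; linarith
      have hhL : (ψ L + ε') • e - φ (L • e) ∈ interior P := by
        have h1 : ε' • e ∈ interior P := hP.smul_int hε' he
        have h2 : (ψ L) • e - φ (L • e) ∈ P := xi_mem_set hP he hene _
        have h3 := hP.int_add h1 h2
        rw [add_smul]
        convert h3 using 1; abel
      have hc : Continuous fun s : ℝ => (ψ L + ε') • e - φ (s • e) :=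
        continuous_const.sub (hφcont.comp (continuous_id.smul continuous_const))
      have hnb : (fun s : ℝ => (ψ L + ε') • e - φ (s • e)) ⁻¹' interior P ∈ nhds L :=
        hc.continuousAt.preimage_mem_nhds (isOpen_interior.mem_nhds (by simpa using hhL))
      obtain ⟨η, hη, hball⟩ := Metric.mem_nhds_iff.1 hnb
      obtain ⟨n0, hn0⟩ : ∃ n, a n < L + η := by
        by_contra hcon
        push_neg at hcon
        have : L + η ≤ L := hLdef ▸ le_ciInf hcon
        linarith
      have hmem : a n0 ∈ Metric.ball L η := by
        rw [Metric.mem_ball, Real.dist_eq, abs_lt]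
        constructor <;> [linarith [hLle n0]; linarith]
      have hsmall : ψ (a n0) ≤ ψ L + ε' :=
        xi_le hP he hene (interior_subset (hball hmem))
      have hfin : a (n0 + 1) < L := lt_of_le_of_lt (hstep n0) (by linarith)
      exact absurd (hLle (n0 + 1)) (not_le.2 hfin)
    have : L < ε := by rw [hLzero]; exact hε
    exact exists_lt_of_ciInf_lt this
  -- d-bound for iterates
  have hbound : ∀ x : X, ∀ ε : ℝ, 0 < ε →
      ∃ N, ∀ n ≥ N, ∀ m ≥ N, d (T^[n] x) (T^[m] x) ≤ 2 * ε := by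
    intro x ε hε
    have hψε : ψ ε < ε := hψlt ε hε
    obtain ⟨N, hN⟩ := hgap x (ε - ψ ε) (by linarith)
    have hclaim : ∀ k : ℕ, d (T^[N] x) (T^[N + k] x) ≤ ε := by
      intro k
      induction k with
      | zero => simpa [hdself] using hε.le
      | succ k ih =>
        have h1 : d (T^[N] x) (T^[N + (k + 1)] x) ≤
            d (T^[N] x) (T^[N + 1] x) + d (T^[N + 1] x) (T^[N + (k + 1)] x) :=
          hdtri _ _ _
        have h2 : d (T^[N + 1] x) (T^[N + (k + 1)] x) ≤ ψ ε := by
          have he1 : T^[N + 1] x = T (T^[N] x) := Function.iterate_succ_apply' T N x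
          have he2 : T^[N + (k + 1)] x = T (T^[N + k] x) := by
            rw [show N + (k + 1) = (N + k) + 1 by ring, Function.iterate_succ_apply']
          rw [he1, he2]
          exact (hdT _ _).trans (hψmono _ _ (hdnn _ _) ih)
        linarith [hN]
    obtain ⟨N, hN2⟩ : ∃ N, ∀ n ≥ N, d (T^[N] x) (T^[n] x) ≤ ε := by
      refine ⟨N, fun n hn => ?_⟩
      have := hclaim (n - N)
      rwa [Nat.add_sub_cancel' hn] at this
    refine ⟨N, fun n hn m hm => ?_⟩
    calc d (T^[n] x) (T^[m] x) ≤ d (T^[n] x) (T^[N] x) + d (T^[N] x) (T^[m] x) := hdtri _ _ _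
    _ ≤ ε + ε := by
        have := hN2 n hn
        rw [hdsymm] at this
        exact add_le_add this (hN2 m hm)
    _ = 2 * ε := by ring
  -- cone-Cauchy
  have hCauchy : ∀ x : X, ConeCauchy P p (fun n => T^[n] x) := by
    intro x c hc
    obtain ⟨δ, hδ, hδc⟩ := hP.trick hc e
    obtain ⟨N, hN⟩ := hbound x (δ / 3) (by positivity)
    refine ⟨N, fun n hn m hm => ?_⟩
    have h1 : d (T^[n] x) (T^[m] x) < δ := by have := hN n hn m hm; linarith
    exact xi_cone hP he hene (hpP _ _) h1 hδc
  -- cone convergence implies d-convergence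
  have hconvd : ∀ (x : ℕ → X) (u : X), ConeConverges P p x u →
      ∀ ε : ℝ, 0 < ε → ∃ N, ∀ n ≥ N, d (x n) u ≤ ε := by
    intro x u hconv ε hε
    obtain ⟨N, hN⟩ := hconv (ε • e) (hP.smul_int hε he)
    refine ⟨N, fun n hn => ?_⟩
    exact xi_le hP he hene (interior_subset (hN n hn))
  -- fixed point of the limit
  have hfix : ∀ (x : X) (u : X), ConeConverges P p (fun n => T^[n] x) u → T u = u := by
    intro x u hconv
    have hle : ∀ ε : ℝ, 0 < ε → d u (T u) ≤ ε := by
      intro ε hε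
      obtain ⟨N, hN⟩ := hconvd _ u hconv (ε / 2) (by positivity)
      have h1 : d u (T u) ≤ d u (T^[N + 1] x) + d (T^[N + 1] x) (T u) := hdtri _ _ _
      have h2 : d u (T^[N + 1] x) ≤ ε / 2 := by
        rw [hdsymm]; exact hN (N + 1) (by omega)
      have h3 : d (T^[N + 1] x) (T u) ≤ ε / 2 := by
        rw [Function.iterate_succ_apply']
        refine le_trans (hdT _ _) (le_trans (hψle _ (hdnn _ _)) (hN N le_rfl))
      linarith
    have h0 : d u (T u) ≤ 0 := by
      by_contra h
      push_neg at h
      have := hle (d u (T u) / 2) (by linarith)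
      linarith
    exact ((hd0 u (T u) (le_antisymm h0 (hdnn _ _)))).symm
  have huniq : ∀ u v : X, T u = u → T v = v → u = v := by
    intro u v hu hv
    refine hd0 u v ?_
    by_contra h
    have hpos : 0 < d u v := (hdnn u v).lt_of_ne (Ne.symm h)
    have : d u v ≤ ψ (d u v) := by
      calc d u v = d (T u) (T v) := by rw [hu, hv]
      _ ≤ ψ (d u v) := hdT u v
    linarith [hψlt _ hpos]
  obtain ⟨x₀⟩ := ‹Nonempty X›
  obtain ⟨u, hu⟩ := hcomplete _ (hCauchy x₀)
  have hTu : T u = u := hfix x₀ u hu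
  refine ⟨u, hTu, fun v hv => huniq v u hv hTu, fun x => ?_⟩
  obtain ⟨w, hw⟩ := hcomplete _ (hCauchy x)
  have hTw : T w = w := hfix x w hw
  rwa [huniq w u hTw hTu] at hw
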